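/- Fix m > 1, d ≥ 1, C > 0, and let α = d/(d(m−1)+2), β = α/d, k = α(m−1)/(2md). Then the Barenblatt–Pattle profile ρ(x,t) = t^{−α} (C − k ||x||² t^{−2β})_+^{1/(m−1)} satisfies the porous medium equation ∂_t ρ = Δ(ρ^m) at all points (x,t) with t > 0 and C − k||x||² t^{−2β} > 0. -/

import Mathlib

noncomputable def laplacian {d : ℕ} (f : EuclideanSpace ℝ (Fin d) → ℝ)
    (x : EuclideanSpace ℝ (Fin d)) : ℝ :=
  ∑ i, fderiv ℝ (fun y => fderiv ℝ f y (EuclideanSpace.single i 1)) x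
    (EuclideanSpace.single i 1)

theorem stmt_15 {d : ℕ} (hd : 1 ≤ d) (m C α β k : ℝ)
    (hm : 1 < m) (hC : 0 < C)
    (hα : α = d / (d * (m - 1) + 2)) (hβ : β = α / d)
    (hk : k = α * (m - 1) / (2 * m * d))
    (ρ : EuclideanSpace ℝ (Fin d) → ℝ → ℝ)
    (hρ : ∀ x t, ρ x t
        = t ^ (-α) * (max (C - k * ‖x‖ ^ 2 * t ^ (-(2 * β))) 0) ^ (1 / (m - 1)))
    (x : EuclideanSpace ℝ (Fin d)) (t : ℝ) (ht : 0 < t)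
    (hpos : 0 < C - k * ‖x‖ ^ 2 * t ^ (-(2 * β))) :
    deriv (fun s => ρ x s) t = laplacian (fun y => ρ y t ^ m) x := by
  have hdR : (0:ℝ) < (d:ℝ) := by exact_mod_cast Nat.lt_of_lt_of_le Nat.zero_lt_one hd
  have hm1 : (0:ℝ) < m - 1 := by linarith
  have hm0 : (0:ℝ) < m := by linarith
  set p : ℝ := 1 / (m - 1) with hp
  set q : ℝ := p * m with hq
  have hqp : q - 1 = p := by
    rw [hq, hp]; field_simp; ring
  have hD : (0:ℝ) < (d:ℝ) * (m - 1) + 2 := by positivity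
  have hα1 : α * m + 2 * β = α + 1 := by
    rw [hβ, hα]; field_simp; ring
  have hA : α = 2 * (d:ℝ) * q * k := by
    rw [hk, hq, hp]; field_simp
  have hB : β = 2 * q * k := by
    rw [hβ, hk, hq, hp]; field_simp
  -- ===== time derivative =====
  have hcont : ContinuousAt (fun s : ℝ => C - k * ‖x‖ ^ 2 * s ^ (-(2 * β))) t :=
    continuousAt_const.sub
      (continuousAt_const.mul (Real.continuousAt_rpow_const t _ (Or.inl ht.ne')))
  have hevt : (fun s => ρ x s)
      =ᶠ[nhds t] fun s => s ^ (-α) * (C - k * ‖x‖ ^ 2 * s ^ (-(2 * β))) ^ p := by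
    filter_upwards [hcont.eventually_mem (isOpen_Ioi.mem_nhds hpos)] with s hs
    rw [hρ, max_eq_left (le_of_lt hs)]
  have h1 : HasDerivAt (fun s : ℝ => s ^ (-α)) (-α * t ^ (-α - 1)) t :=
    Real.hasDerivAt_rpow_const (Or.inl ht.ne')
  have h2 : HasDerivAt (fun s : ℝ => s ^ (-(2 * β))) (-(2 * β) * t ^ (-(2 * β) - 1)) t :=
    Real.hasDerivAt_rpow_const (Or.inl ht.ne')
  have h3 : HasDerivAt (fun s : ℝ => C - k * ‖x‖ ^ 2 * s ^ (-(2 * β)))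
      (2 * β * k * ‖x‖ ^ 2 * t ^ (-(2 * β) - 1)) t := by
    have h := (h2.const_mul (k * ‖x‖ ^ 2)).const_sub C
    convert h using 1
    · rfl
    · rfl
    ring
  have h4 : HasDerivAt (fun s : ℝ => (C - k * ‖x‖ ^ 2 * s ^ (-(2 * β))) ^ p)
      (p * (C - k * ‖x‖ ^ 2 * t ^ (-(2 * β))) ^ (p - 1)
        * (2 * β * k * ‖x‖ ^ 2 * t ^ (-(2 * β) - 1))) t := by
    have h := h3.rpow_const (p := p) (Or.inl hpos.ne')
    convert h using 1
    ring
  have h5 : HasDerivAt (fun s : ℝ => s ^ (-α) * (C - k * ‖x‖ ^ 2 * s ^ (-(2 * β))) ^ p) _ t :=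
    h1.mul h4
  rw [Filter.EventuallyEq.deriv_eq hevt, h5.deriv]
  -- ===== spatial derivatives =====
  have hnsq : ∀ y : EuclideanSpace ℝ (Fin d),
      HasFDerivAt (fun z : EuclideanSpace ℝ (Fin d) => ‖z‖ ^ 2) (2 • (innerSL ℝ y)) y :=
    fun y => (hasStrictFDerivAt_norm_sq y).hasFDerivAt
  have hlin : ∀ s : ℝ, HasDerivAt (fun r : ℝ => C - k * r * t ^ (-(2 * β)))
      (-(k * t ^ (-(2 * β)))) s := by
    intro s
    have h := (((hasDerivAt_id s).const_mul k).mul_const (t ^ (-(2 * β)))).const_sub C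
    convert h using 1
    · rfl
    · rfl
    · rfl
    ring
  have hφ : ∀ s : ℝ, 0 < C - k * s * t ^ (-(2 * β)) →
      HasDerivAt (fun r : ℝ => t ^ (-(α * m)) * (C - k * r * t ^ (-(2 * β))) ^ q)
        (t ^ (-(α * m)) * q * (-(k * t ^ (-(2 * β))))
          * (C - k * s * t ^ (-(2 * β))) ^ (q - 1)) s := by
    intro s hs
    have h := ((hlin s).rpow_const (p := q) (Or.inl hs.ne')).const_mul (t ^ (-(α * m)))
    convert h using 1
    · rfl
    · rfl
    ring
  have hφ' : ∀ s : ℝ, 0 < C - k * s * t ^ (-(2 * β)) →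
      HasDerivAt (fun r : ℝ => t ^ (-(α * m)) * q * (-(k * t ^ (-(2 * β))))
          * (C - k * r * t ^ (-(2 * β))) ^ (q - 1))
        (t ^ (-(α * m)) * q * (-(k * t ^ (-(2 * β))))
          * ((q - 1) * (C - k * s * t ^ (-(2 * β))) ^ (q - 1 - 1)
            * (-(k * t ^ (-(2 * β)))))) s := by
    intro s hs
    have h := ((hlin s).rpow_const (p := q - 1) (Or.inl hs.ne')).const_mul
      (t ^ (-(α * m)) * q * (-(k * t ^ (-(2 * β)))))
    convert h using 1
    · rfl
    · rfl
    ring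
  set S : Set (EuclideanSpace ℝ (Fin d)) :=
    {y | 0 < C - k * ‖y‖ ^ 2 * t ^ (-(2 * β))} with hSdef
  have hSopen : IsOpen S := by
    have hco : Continuous fun y : EuclideanSpace ℝ (Fin d) =>
        C - k * ‖y‖ ^ 2 * t ^ (-(2 * β)) := by
      exact continuous_const.sub
        ((continuous_const.mul (continuous_norm.pow 2)).mul continuous_const)
    exact isOpen_lt continuous_const hco
  have hxS : x ∈ S := hpos
  have hfS : ∀ y ∈ S, ρ y t ^ m
      = t ^ (-(α * m)) * (C - k * ‖y‖ ^ 2 * t ^ (-(2 * β))) ^ q := by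
    intro y hy
    have hy' : 0 < C - k * ‖y‖ ^ 2 * t ^ (-(2 * β)) := hy
    rw [hρ, max_eq_left hy'.le,
      Real.mul_rpow (Real.rpow_nonneg ht.le _) (Real.rpow_nonneg hy'.le _),
      ← Real.rpow_mul ht.le, ← Real.rpow_mul hy'.le, ← hq, neg_mul]
  have hGi : ∀ y ∈ S, ∀ i : Fin d,
      fderiv ℝ (fun z => ρ z t ^ m) y (EuclideanSpace.single i 1)
      = (t ^ (-(α * m)) * q * (-(k * t ^ (-(2 * β))))
          * (C - k * ‖y‖ ^ 2 * t ^ (-(2 * β))) ^ (q - 1)) * (2 * y i) := by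
    intro y hy i
    have hev : (fun z => ρ z t ^ m)
        =ᶠ[nhds y] fun z => t ^ (-(α * m)) * (C - k * ‖z‖ ^ 2 * t ^ (-(2 * β))) ^ q := by
      filter_upwards [hSopen.mem_nhds hy] with z hz using hfS z hz
    have hg : HasFDerivAt
        (fun z : EuclideanSpace ℝ (Fin d) =>
          t ^ (-(α * m)) * (C - k * ‖z‖ ^ 2 * t ^ (-(2 * β))) ^ q)
        ((t ^ (-(α * m)) * q * (-(k * t ^ (-(2 * β))))
          * (C - k * ‖y‖ ^ 2 * t ^ (-(2 * β))) ^ (q - 1)) • (2 • innerSL ℝ y)) y :=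
      (hφ (‖y‖ ^ 2) hy).comp_hasFDerivAt (f := fun z : EuclideanSpace ℝ (Fin d) => ‖z‖ ^ 2) y (hnsq y)
    rw [hev.fderiv_eq, hg.fderiv]
    simp [EuclideanSpace.inner_single_right, real_inner_smul_left] <;> ring
  have houter : ∀ i : Fin d, HasFDerivAt
      (fun z : EuclideanSpace ℝ (Fin d) =>
        (t ^ (-(α * m)) * q * (-(k * t ^ (-(2 * β))))
          * (C - k * ‖z‖ ^ 2 * t ^ (-(2 * β))) ^ (q - 1)) * (2 * z i))
      ((t ^ (-(α * m)) * q * (-(k * t ^ (-(2 * β))))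
          * (C - k * ‖x‖ ^ 2 * t ^ (-(2 * β))) ^ (q - 1)) • ((2:ℝ) • (EuclideanSpace.proj i))
        + (2 * x i) • ((t ^ (-(α * m)) * q * (-(k * t ^ (-(2 * β))))
            * ((q - 1) * (C - k * ‖x‖ ^ 2 * t ^ (-(2 * β))) ^ (q - 1 - 1)
              * (-(k * t ^ (-(2 * β)))))) • (2 • innerSL ℝ x))) x := by
    intro i
    have hc : HasFDerivAt
        (fun z : EuclideanSpace ℝ (Fin d) =>
          t ^ (-(α * m)) * q * (-(k * t ^ (-(2 * β))))
            * (C - k * ‖z‖ ^ 2 * t ^ (-(2 * β))) ^ (q - 1))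
        ((t ^ (-(α * m)) * q * (-(k * t ^ (-(2 * β))))
            * ((q - 1) * (C - k * ‖x‖ ^ 2 * t ^ (-(2 * β))) ^ (q - 1 - 1)
              * (-(k * t ^ (-(2 * β)))))) • (2 • innerSL ℝ x)) x :=
      (hφ' (‖x‖ ^ 2) hpos).comp_hasFDerivAt (f := fun z : EuclideanSpace ℝ (Fin d) => ‖z‖ ^ 2) x (hnsq x)
    have hl : HasFDerivAt (fun z : EuclideanSpace ℝ (Fin d) => 2 * z i)
        ((2:ℝ) • (EuclideanSpace.proj i : EuclideanSpace ℝ (Fin d) →L[ℝ] ℝ)) x :=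
      (EuclideanSpace.proj i : EuclideanSpace ℝ (Fin d) →L[ℝ] ℝ).hasFDerivAt.const_mul 2
    exact hc.mul hl
  have hlap : laplacian (fun y => ρ y t ^ m) x
      = ∑ i : Fin d,
          ((t ^ (-(α * m)) * q * (-(k * t ^ (-(2 * β))))
            * (C - k * ‖x‖ ^ 2 * t ^ (-(2 * β))) ^ (q - 1)) * 2
          + (t ^ (-(α * m)) * q * (-(k * t ^ (-(2 * β))))
            * ((q - 1) * (C - k * ‖x‖ ^ 2 * t ^ (-(2 * β))) ^ (q - 1 - 1)
              * (-(k * t ^ (-(2 * β)))))) * (4 * (x i) ^ 2)) := by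
    unfold laplacian
    refine Finset.sum_congr rfl fun i _ => ?_
    have hev : (fun y => fderiv ℝ (fun z => ρ z t ^ m) y (EuclideanSpace.single i 1))
        =ᶠ[nhds x] fun y =>
          (t ^ (-(α * m)) * q * (-(k * t ^ (-(2 * β))))
            * (C - k * ‖y‖ ^ 2 * t ^ (-(2 * β))) ^ (q - 1)) * (2 * y i) := by
      filter_upwards [hSopen.mem_nhds hxS] with z hz using hGi z hz i
    rw [hev.fderiv_eq, (houter i).fderiv]
    simp [EuclideanSpace.inner_single_right, EuclideanSpace.single_apply,
      real_inner_smul_left] <;> ring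
  rw [hlap]
  -- ===== final algebra =====
  have hsum : ∑ i : Fin d, (x i) ^ 2 = ‖x‖ ^ 2 := by
    rw [EuclideanSpace.norm_eq, Real.sq_sqrt (by positivity)]
    exact Finset.sum_congr rfl fun i _ => by rw [Real.norm_eq_abs, sq_abs]
  rw [Finset.sum_add_distrib, Finset.sum_const, Finset.card_univ, Fintype.card_fin]
  have hsum2 : ∑ i : Fin d,
      (t ^ (-(α * m)) * q * (-(k * t ^ (-(2 * β))))
        * ((q - 1) * (C - k * ‖x‖ ^ 2 * t ^ (-(2 * β))) ^ (q - 1 - 1)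
          * (-(k * t ^ (-(2 * β)))))) * (4 * (x i) ^ 2)
      = (t ^ (-(α * m)) * q * (-(k * t ^ (-(2 * β))))
        * ((q - 1) * (C - k * ‖x‖ ^ 2 * t ^ (-(2 * β))) ^ (q - 1 - 1)
          * (-(k * t ^ (-(2 * β)))))) * (4 * ‖x‖ ^ 2) := by
    rw [← Finset.mul_sum]
    congr 1
    rw [← Finset.mul_sum, hsum]
  rw [hsum2, hqp]
  have E1 : t ^ (-(α * m)) * t ^ (-(2 * β)) = t ^ (-α - 1) := by
    rw [← Real.rpow_add ht]; congr 1; linarith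
  have E2 : t ^ (-(α * m)) * t ^ (-(2 * β)) * t ^ (-(2 * β))
      = t ^ (-α) * t ^ (-(2 * β) - 1) := by
    rw [← Real.rpow_add ht, ← Real.rpow_add ht, ← Real.rpow_add ht]; congr 1; linarith
  rw [nsmul_eq_mul]
  linear_combination
    (α * (C - k * ‖x‖ ^ 2 * t ^ (-(2 * β))) ^ p) * E1
    - (4 * q * k ^ 2 * p * ‖x‖ ^ 2
        * (C - k * ‖x‖ ^ 2 * t ^ (-(2 * β))) ^ (p - 1)) * E2
    - (t ^ (-(α * m)) * t ^ (-(2 * β))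
        * (C - k * ‖x‖ ^ 2 * t ^ (-(2 * β))) ^ p) * hA
    + (2 * k * p * ‖x‖ ^ 2 * (t ^ (-α) * t ^ (-(2 * β) - 1))
        * (C - k * ‖x‖ ^ 2 * t ^ (-(2 * β))) ^ (p - 1)) * hB
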